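/- Cubical integral representation of multiple zeta values (Proposition 1.3): For every tuple of positive integers k = (k_1,…,k_p) with k_1 ≥ 2 and n = k_1+…+k_p, the function f_k is Lebesgue integrable on the open unit cube (0,1)^n and ζ(k_1,…,k_p) = ∫_{(0,1)^n} f_k(x_1,…,x_n) dx_1⋯dx_n. -/

import Mathlib

open MeasureTheory

/-- The multiple zeta value `ζ(k₁,…,k_p) = ∑_{n₁ > … > n_p > 0} 1/(n₁^{k₁} ⋯ n_p^{k_p})`. -/
noncomputable def zeta (k : List ℕ) : ℝ :=
  ∑' n : {f : Fin k.length → ℕ // StrictAnti f ∧ ∀ i, 0 < f i},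
    ∏ i : Fin k.length, (1 : ℝ) / (n.1 i : ℝ) ^ (k.get i)

/-- The cubical integrand
`f_k(x₁,…,x_n) = ∏_{i=1}^p (x₁⋯x_{K_{i−1}})/(1 − x₁⋯x_{K_i})`, where
`K_i = k₁ + … + k_i` (indices of the variables starting at `0`). -/
noncomputable def fk (k : List ℕ) (x : ℕ → ℝ) : ℝ :=
  ∏ i ∈ Finset.range k.length,
    (∏ j ∈ Finset.range ((k.take i).sum), x j) /
      (1 - ∏ j ∈ Finset.range ((k.take (i + 1)).sum), x j)

/-- The open unit cube `(0,1)^n`. -/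
def cube (n : ℕ) : Set (Fin n → ℝ) := {x | ∀ i, x i ∈ Set.Ioo (0 : ℝ) 1}

/-- Extension of a vector of `ℝ^n` to a function `ℕ → ℝ` (by `0`). -/
def extFin {n : ℕ} (x : Fin n → ℝ) : ℕ → ℝ :=
  fun j => if h : j < n then x ⟨j, h⟩ else 0

/-- Product of `tsum`s over `ℕ` equals the `tsum` over the pi type, in `ℝ≥0∞`. -/
theorem tsum_pi_prod : ∀ (p : ℕ) (F : Fin p → ℕ → ENNReal),
    (∏ i, ∑' a : ℕ, F i a) = ∑' m : Fin p → ℕ, ∏ i, F i (m i) := by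
  intro p
  induction p with
  | zero =>
    intro F
    rw [tsum_eq_single (fun i => Fin.elim0 i) (by
      intro b hb; exact absurd (Subsingleton.elim b _) hb)]
    simp
  | succ q ih =>
    intro F
    rw [← (Fin.consEquiv (fun _ : Fin (q+1) => ℕ)).tsum_eq]
    have : ∀ x : ℕ × (Fin q → ℕ), ∏ i, F i ((Fin.consEquiv (fun _ : Fin (q+1) => ℕ)) x i)
        = F 0 x.1 * ∏ i : Fin q, F i.succ (x.2 i) := by
      intro x
      rw [Fin.prod_univ_succ]
      simp [Fin.consEquiv]
    rw [tsum_congr this, ENNReal.tsum_prod']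
    simp_rw [ENNReal.tsum_mul_left, ENNReal.tsum_mul_right]
    rw [Fin.prod_univ_succ, ih (fun i a => F i.succ a)]

def mext {p : ℕ} (m : Fin p → ℕ) (j : ℕ) : ℕ := if h : j < p then m ⟨j, h⟩ else 0

def nu {p : ℕ} (m : Fin p → ℕ) (i : ℕ) : ℕ := ∑ j ∈ Finset.Ico i p, (mext m j + 1)

lemma mext_coe {p : ℕ} (m : Fin p → ℕ) (i : Fin p) : mext m i = m i := by
  simp [mext, i.isLt, Fin.eta]

lemma nu_of_le {p : ℕ} (m : Fin p → ℕ) {i : ℕ} (h : p ≤ i) : nu m i = 0 := by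
  rw [nu, Finset.Ico_eq_empty (by omega), Finset.sum_empty]

lemma nu_succ {p : ℕ} (m : Fin p → ℕ) {i : ℕ} (h : i < p) :
    nu m i = mext m i + 1 + nu m (i + 1) :=
  Finset.sum_eq_sum_Ico_succ_bot h _

lemma nu_strict {p : ℕ} (m : Fin p → ℕ) {i j : ℕ} (hij : i < j) (hj : j ≤ p) :
    nu m j < nu m i := by
  apply Finset.sum_lt_sum_of_subset (Finset.Ico_subset_Ico (by omega) le_rfl)
    (i := i) (by simp; omega) (by simp; omega) (by omega)
  intro k _ _; omega

lemma one_add_le_nu {p : ℕ} (m : Fin p → ℕ) {i : ℕ} (h : i < p) :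
    mext m i + 1 ≤ nu m i :=
  Finset.single_le_sum (f := fun j => mext m j + 1) (fun _ _ => Nat.zero_le _)
    (by simp; omega)

lemma one_add_le_nu_zero {p : ℕ} (m : Fin p → ℕ) (i : Fin p) :
    m i + 1 ≤ nu m 0 := by
  rw [← mext_coe m i]
  exact Finset.single_le_sum (f := fun j => mext m j + 1) (fun _ _ => Nat.zero_le _)
    (by simp [i.isLt])

lemma nu_pos {p : ℕ} (m : Fin p → ℕ) {i : ℕ} (h : i < p) : 0 < nu m i :=
  lt_of_lt_of_le (by omega) (one_add_le_nu m h)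

def fext {p : ℕ} (f : Fin p → ℕ) (j : ℕ) : ℕ := if h : j < p then f ⟨j, h⟩ else 0

def psi {p : ℕ} (f : Fin p → ℕ) : Fin p → ℕ :=
  fun i => fext f i - fext f (i + 1) - 1

lemma telescope (F : ℕ → ℕ) (hF : ∀ j, F (j + 1) ≤ F j) :
    ∀ b a, a ≤ b → ∑ j ∈ Finset.Ico a b, (F j - F (j + 1)) = F a - F b := by
  have hanti : Antitone F := antitone_nat_of_succ_le hF
  intro b
  induction b with
  | zero => intro a ha; interval_cases a; simp
  | succ b ih =>
    intro a ha
    rcases eq_or_lt_of_le ha with rfl | h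
    · simp
    · have hab : a ≤ b := by omega
      rw [Finset.sum_Ico_succ_top hab, ih a hab]
      have h1 : F b ≤ F a := hanti hab
      have h2 : F (b + 1) ≤ F b := hF b
      omega

def decEquiv (p : ℕ) : (Fin p → ℕ) ≃ {f : Fin p → ℕ // StrictAnti f ∧ ∀ i, 0 < f i} where
  toFun m := ⟨fun i => nu m i, by
    constructor
    · intro i j hij
      exact nu_strict m hij (le_of_lt j.isLt)
    · intro i; exact nu_pos m i.isLt⟩
  invFun s := psi s.1
  left_inv m := by
    funext i
    have hfx : ∀ j : ℕ, fext (fun i : Fin p => nu m i) j = nu m j := by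
      intro j
      by_cases h : j < p
      · simp [fext, h]
      · rw [fext, dif_neg h, nu_of_le m (by omega)]
    show fext _ _ - fext _ _ - 1 = m i
    rw [hfx, hfx, nu_succ m i.isLt, mext_coe]
    omega
  right_inv s := by
    obtain ⟨f, hA, hpos⟩ := s
    apply Subtype.ext
    funext i
    show nu (psi f) i = f i
    have hstep : ∀ j, fext f (j + 1) ≤ fext f j := by
      intro j
      by_cases h : j + 1 < p
      · have := hA (show (⟨j, by omega⟩ : Fin p) < ⟨j + 1, h⟩ from by
          simp [Fin.lt_def])
        simp only [fext, dif_pos h, dif_pos (show j < p by omega)]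
        exact le_of_lt this
      · by_cases h2 : j < p <;> simp [fext, h, h2]
    have hstep' : ∀ j, j < p → fext f (j + 1) + 1 ≤ fext f j := by
      intro j hj
      by_cases h : j + 1 < p
      · have := hA (show (⟨j, by omega⟩ : Fin p) < ⟨j + 1, h⟩ from by
          simp [Fin.lt_def])
        simp only [fext, dif_pos h, dif_pos hj]
        omega
      · have := hpos ⟨j, hj⟩
        simp only [fext, dif_neg h, dif_pos hj]
        omega
    have : ∀ j ∈ Finset.Ico (i : ℕ) p, mext (psi f) j + 1 = fext f j - fext f (j + 1) := by
      intro j hj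
      simp only [Finset.mem_Ico] at hj
      have hjp : j < p := hj.2
      simp only [mext, psi, dif_pos hjp]
      have := hstep' j hjp
      omega
    rw [nu, Finset.sum_congr rfl this, telescope (fext f) hstep p i (le_of_lt i.isLt)]
    have : fext f p = 0 := by simp [fext]
    rw [this]
    simp [fext, i.isLt, Fin.eta]

def Kp (k : List ℕ) (i : ℕ) : ℕ := (k.take i).sum

lemma Kp_zero (k : List ℕ) : Kp k 0 = 0 := rfl

lemma Kp_succ (k : List ℕ) {i : ℕ} (h : i < k.length) :
    Kp k (i + 1) = Kp k i + k.get ⟨i, h⟩ := by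
  simpa [Kp] using List.sum_take_succ k i h

lemma Kp_length (k : List ℕ) : Kp k k.length = k.sum := by
  simp [Kp]

lemma Kp_mono (k : List ℕ) : Monotone (Kp k) := by
  apply monotone_nat_of_le_succ
  intro i
  by_cases h : i < k.length
  · rw [Kp_succ k h]; omega
  · unfold Kp
    rw [List.take_of_length_le (by omega), List.take_of_length_le (by omega)]

lemma Kp_lt (k : List ℕ) (hk : ∀ a ∈ k, 0 < a) {i j : ℕ} (hij : i < j)
    (hj : j ≤ k.length) : Kp k i < Kp k j := by
  have h1 : i < k.length := by omega
  calc Kp k i < Kp k (i + 1) := by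
        have hpos : 0 < k.get ⟨i, h1⟩ := hk _ (List.get_mem k ⟨i, h1⟩)
        rw [Kp_succ k h1]
        omega
    _ ≤ Kp k j := Kp_mono k (by omega)

def bIdx (k : List ℕ) (j : ℕ) : ℕ :=
  ((Finset.range k.length).filter (fun i => Kp k (i + 1) ≤ j)).card

lemma bIdx_eq (k : List ℕ) {t j : ℕ} (ht : t < k.length)
    (h1 : Kp k t ≤ j) (h2 : j < Kp k (t + 1)) : bIdx k j = t := by
  have : (Finset.range k.length).filter (fun i => Kp k (i + 1) ≤ j) = Finset.range t := by
    ext a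
    simp only [Finset.mem_filter, Finset.mem_range]
    constructor
    · rintro ⟨ha, hKa⟩
      by_contra hta
      have : Kp k (t + 1) ≤ Kp k (a + 1) := Kp_mono k (by omega)
      omega
    · intro hat
      refine ⟨by omega, le_trans (le_trans (Kp_mono k (by omega : a + 1 ≤ t)) ?_) h1⟩
      exact le_rfl
  rw [bIdx, this, Finset.card_range]

lemma lt_Kp_iff (k : List ℕ) {t j : ℕ} (ht : t < k.length)
    (h1 : Kp k t ≤ j) (h2 : j < Kp k (t + 1)) {i : ℕ} (hi : i ≤ k.length) :
    j < Kp k i ↔ t + 1 ≤ i := by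
  constructor
  · intro h
    by_contra hc
    have : Kp k i ≤ j := le_trans (Kp_mono k (by omega : i ≤ t)) h1
    omega
  · intro h
    exact lt_of_lt_of_le h2 (Kp_mono k h)

lemma prod_blocks {M : Type*} [CommMonoid M] (k : List ℕ) (g : ℕ → M) :
    ∀ q, q ≤ k.length →
      ∏ j ∈ Finset.range (Kp k q), g j
        = ∏ i ∈ Finset.range q, ∏ j ∈ Finset.Ico (Kp k i) (Kp k (i + 1)), g j := by
  intro q
  induction q with
  | zero => simp [Kp_zero]
  | succ q ih =>
    intro hq
    rw [Finset.prod_range_succ, ← ih (by omega),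
      ← Finset.prod_range_mul_prod_Ico g (Kp_mono k (by omega : q ≤ q + 1))]

lemma cube_eq (n : ℕ) : cube n = Set.pi Set.univ (fun _ : Fin n => Set.Ioo (0 : ℝ) 1) := by
  ext x; simp [cube, Set.mem_pi]

lemma cube_measurable (n : ℕ) : MeasurableSet (cube n) := by
  rw [cube_eq]; exact MeasurableSet.univ_pi fun _ => measurableSet_Ioo

lemma integral_Ioo_pow (e : ℕ) :
    ∫ t in Set.Ioo (0 : ℝ) 1, t ^ e = ((e : ℝ) + 1)⁻¹ := by
  rw [← integral_Ioc_eq_integral_Ioo, ← intervalIntegral.integral_of_le zero_le_one,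
    integral_pow]
  ring

lemma integrableOn_Ioo_pow (e : ℕ) :
    IntegrableOn (fun t : ℝ => t ^ e) (Set.Ioo (0 : ℝ) 1) := by
  exact (intervalIntegral.intervalIntegrable_pow e).1.mono_set Set.Ioo_subset_Ioc_self

/-- Fubini for a monomial over the cube. -/
lemma monomial_cube (n : ℕ) (e : Fin n → ℕ) :
    IntegrableOn (fun x : Fin n → ℝ => ∏ j, x j ^ e j) (cube n) volume ∧
      ∫ x in cube n, ∏ j, x j ^ e j = ∏ j, ((e j : ℝ) + 1)⁻¹ := by
  set g : Fin n → ℝ → ℝ := fun j => (Set.Ioo (0:ℝ) 1).indicator (fun t => t ^ e j) with hg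
  have hgint : ∀ j, Integrable (g j) := fun j =>
    (integrable_indicator_iff measurableSet_Ioo).2 (integrableOn_Ioo_pow (e j))
  have hind : ∀ x : Fin n → ℝ,
      (cube n).indicator (fun x : Fin n → ℝ => ∏ j, x j ^ e j) x = ∏ j, g j (x j) := by
    intro x
    by_cases hx : x ∈ cube n
    · rw [Set.indicator_of_mem hx]
      exact Finset.prod_congr rfl fun j _ => (Set.indicator_of_mem (hx j) _).symm
    · rw [Set.indicator_of_notMem hx]
      obtain ⟨j, hj⟩ : ∃ j, x j ∉ Set.Ioo (0:ℝ) 1 := by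
        by_contra h
        push_neg at h
        exact hx h
      exact (Finset.prod_eq_zero (Finset.mem_univ j)
        (by rw [hg]; simp [Set.indicator_of_notMem hj])).symm
  have hInt : Integrable (fun x : Fin n → ℝ => ∏ j, g j (x j)) :=
    Integrable.fintype_prod (𝕜 := ℝ) hgint
  constructor
  · have h2 : Integrable ((cube n).indicator fun x : Fin n → ℝ => ∏ j, x j ^ e j) :=
      hInt.congr (Filter.EventuallyEq.of_eq (funext hind)).symm
    exact (integrable_indicator_iff (cube_measurable n)).1 h2
  · rw [← integral_indicator (cube_measurable n)]
    calc ∫ x : Fin n → ℝ, (cube n).indicator _ x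
        = ∫ x : Fin n → ℝ, ∏ j, g j (x j) := by rw [funext hind]
      _ = ∏ j, ∫ t, g j t := integral_fintype_prod_eq_prod g
      _ = ∏ j, ((e j : ℝ) + 1)⁻¹ := by
          apply Finset.prod_congr rfl
          intro j _
          rw [hg, integral_indicator measurableSet_Ioo, integral_Ioo_pow]
section E
variable (k : List ℕ)

lemma exists_block (hk : ∀ a ∈ k, 0 < a) {j : ℕ} (hj : j < k.sum) :
    ∃ t, t < k.length ∧ Kp k t ≤ j ∧ j < Kp k (t + 1) := by
  have hspec : Kp k (Nat.findGreatest (fun i => Kp k i ≤ j) k.length) ≤ j :=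
    Nat.findGreatest_spec (P := fun i => Kp k i ≤ j) (m := 0) (Nat.zero_le _)
      (by show Kp k 0 ≤ j; rw [Kp_zero]; exact Nat.zero_le _)
  set t := Nat.findGreatest (fun i => Kp k i ≤ j) k.length with htd
  have htlen : t ≤ k.length := Nat.findGreatest_le _
  have htlt : t < k.length := by
    rcases eq_or_lt_of_le htlen with h | h
    · exfalso; rw [h, Kp_length] at hspec; omega
    · exact h
  refine ⟨t, htlt, hspec, ?_⟩
  by_contra hc
  exact Nat.findGreatest_is_greatest (P := fun i => Kp k i ≤ j) (lt_add_one t)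
    (by omega) (by omega)

lemma exp_sum (hk : ∀ a ∈ k, 0 < a) {t j : ℕ} (ht : t < k.length)
    (h1 : Kp k t ≤ j) (h2 : j < Kp k (t + 1)) (m : Fin k.length → ℕ) :
    ∑ i ∈ Finset.range k.length,
      ((if j < Kp k i then 1 else 0) + (if j < Kp k (i + 1) then 1 else 0) * mext m i)
      = nu m t - 1 := by
  rw [Finset.sum_add_distrib]
  have hA : ∑ i ∈ Finset.range k.length, (if j < Kp k i then 1 else 0)
      = k.length - (t + 1) := by
    have hc : ∑ i ∈ Finset.range k.length, (if j < Kp k i then 1 else 0)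
        = ∑ i ∈ Finset.range k.length, (if t + 1 ≤ i then 1 else 0) :=
      Finset.sum_congr rfl (fun i hi => by
        rw [Finset.mem_range] at hi
        exact if_congr (lt_Kp_iff k ht h1 h2 (by omega : i ≤ k.length)) rfl rfl)
    rw [hc, ← Finset.sum_filter]
    have : (Finset.range k.length).filter (fun i => t + 1 ≤ i)
        = Finset.Ico (t + 1) k.length := by
      ext a; simp only [Finset.mem_filter, Finset.mem_range, Finset.mem_Ico]; omega
    rw [this, Finset.sum_const, Nat.card_Ico, smul_eq_mul, mul_one]
  have hB : ∑ i ∈ Finset.range k.length, (if j < Kp k (i + 1) then 1 else 0) * mext m i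
      = ∑ i ∈ Finset.Ico t k.length, mext m i := by
    have hc : ∑ i ∈ Finset.range k.length, (if j < Kp k (i + 1) then 1 else 0) * mext m i
        = ∑ i ∈ Finset.range k.length, (if t ≤ i then mext m i else 0) :=
      Finset.sum_congr rfl (fun i hi => by
        rw [Finset.mem_range] at hi
        rw [if_congr (lt_Kp_iff k ht h1 h2 (by omega : i + 1 ≤ k.length)) rfl rfl]
        split <;> split <;> omega)
    rw [hc, ← Finset.sum_filter]
    congr 1
    ext a; simp only [Finset.mem_filter, Finset.mem_range, Finset.mem_Ico]; omega
  rw [hA, hB]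
  have hnu : nu m t = (∑ i ∈ Finset.Ico t k.length, mext m i) + (k.length - t) := by
    rw [nu, Finset.sum_add_distrib, Finset.sum_const, Nat.card_Ico, smul_eq_mul, mul_one]
  omega

lemma prod_restrict (X : ℕ → ℝ) {a n : ℕ} (h : a ≤ n) :
    ∏ j ∈ Finset.range a, X j
      = ∏ j ∈ Finset.range n, X j ^ (if j < a then 1 else 0) := by
  rw [← Finset.prod_range_mul_prod_Ico (fun j => X j ^ (if j < a then 1 else 0)) h]
  have h1 : ∏ j ∈ Finset.range a, X j ^ (if j < a then 1 else 0)
      = ∏ j ∈ Finset.range a, X j :=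
    Finset.prod_congr rfl fun j hj => by
      rw [Finset.mem_range] at hj; rw [if_pos hj, pow_one]
  have h2 : ∏ j ∈ Finset.Ico a n, X j ^ (if j < a then 1 else 0) = 1 :=
    Finset.prod_eq_one fun j hj => by
      rw [Finset.mem_Ico] at hj; rw [if_neg (by omega), pow_zero]
  rw [h1, h2, mul_one]

lemma monomial_identity (hk : ∀ a ∈ k, 0 < a) (m : Fin k.length → ℕ) (X : ℕ → ℝ) :
    ∏ i ∈ Finset.range k.length,
      ((∏ j ∈ Finset.range (Kp k i), X j)
        * (∏ j ∈ Finset.range (Kp k (i + 1)), X j) ^ mext m i)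
    = ∏ j ∈ Finset.range k.sum, X j ^ (nu m (bIdx k j) - 1) := by
  have hKle : ∀ i, i ≤ k.length → Kp k i ≤ k.sum := by
    intro i hi
    rw [← Kp_length k]
    exact Kp_mono k hi
  calc ∏ i ∈ Finset.range k.length,
        ((∏ j ∈ Finset.range (Kp k i), X j)
          * (∏ j ∈ Finset.range (Kp k (i + 1)), X j) ^ mext m i)
      = ∏ i ∈ Finset.range k.length, ∏ j ∈ Finset.range k.sum,
          X j ^ ((if j < Kp k i then 1 else 0)
            + (if j < Kp k (i + 1) then 1 else 0) * mext m i) := by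
        apply Finset.prod_congr rfl
        intro i hi
        rw [Finset.mem_range] at hi
        rw [prod_restrict X (hKle i (by omega)), prod_restrict X (hKle (i + 1) (by omega)),
          ← Finset.prod_pow, ← Finset.prod_mul_distrib]
        apply Finset.prod_congr rfl
        intro j _
        rw [← pow_mul, ← pow_add]
    _ = ∏ j ∈ Finset.range k.sum, X j ^ (∑ i ∈ Finset.range k.length,
          ((if j < Kp k i then 1 else 0)
            + (if j < Kp k (i + 1) then 1 else 0) * mext m i)) := by
        rw [Finset.prod_comm]
        exact Finset.prod_congr rfl fun j _ => Finset.prod_pow_eq_pow_sum _ _ _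
    _ = ∏ j ∈ Finset.range k.sum, X j ^ (nu m (bIdx k j) - 1) := by
        apply Finset.prod_congr rfl
        intro j hj
        rw [Finset.mem_range] at hj
        obtain ⟨t, ht, h1, h2⟩ := exists_block k hk hj
        rw [exp_sum k hk ht h1 h2 m, bIdx_eq k ht h1 h2]

end E
section F
variable (k : List ℕ)

lemma prod_X_pos {X : ℕ → ℝ} {n : ℕ} (hX : ∀ j < n, 0 < X j ∧ X j < 1) {a : ℕ}
    (ha : a ≤ n) : 0 < ∏ j ∈ Finset.range a, X j :=
  Finset.prod_pos fun j hj => (hX j (by rw [Finset.mem_range] at hj; omega)).1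

lemma prod_X_le_one {X : ℕ → ℝ} {n : ℕ} (hX : ∀ j < n, 0 < X j ∧ X j < 1) {a : ℕ}
    (ha : a ≤ n) : ∏ j ∈ Finset.range a, X j ≤ 1 :=
  Finset.prod_le_one
    (fun j hj => (hX j (by rw [Finset.mem_range] at hj; omega)).1.le)
    (fun j hj => (hX j (by rw [Finset.mem_range] at hj; omega)).2.le)

lemma prod_X_lt_one {X : ℕ → ℝ} {n : ℕ} (hX : ∀ j < n, 0 < X j ∧ X j < 1) {a : ℕ}
    (ha : a ≤ n) (ha' : 1 ≤ a) : ∏ j ∈ Finset.range a, X j < 1 := by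
  obtain ⟨b, rfl⟩ : ∃ b, a = b + 1 := ⟨a - 1, by omega⟩
  rw [Finset.prod_range_succ]
  calc (∏ j ∈ Finset.range b, X j) * X b ≤ 1 * X b := by
        apply mul_le_mul_of_nonneg_right (prod_X_le_one hX (by omega))
          (hX b (by omega)).1.le
    _ < 1 := by rw [one_mul]; exact (hX b (by omega)).2

/-- Pointwise expansion of the integrand into a sum of monomials, on the cube. -/
lemma fk_expansion (hk : ∀ a ∈ k, 0 < a) (X : ℕ → ℝ)
    (hX : ∀ j < k.sum, 0 < X j ∧ X j < 1) :
    ENNReal.ofReal (fk k X)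
      = ∑' m : Fin k.length → ℕ,
          ENNReal.ofReal (∏ j ∈ Finset.range k.sum, X j ^ (nu m (bIdx k j) - 1)) := by
  have hKle : ∀ i, i ≤ k.length → Kp k i ≤ k.sum := by
    intro i hi
    rw [← Kp_length k]
    exact Kp_mono k hi
  have hKpos : ∀ i, i < k.length → 1 ≤ Kp k (i + 1) := by
    intro i hi
    have := Kp_lt k hk (show 0 < i + 1 by omega) (by omega)
    rw [Kp_zero] at this
    omega
  set yy : ℕ → ℝ := fun i => ∏ j ∈ Finset.range (Kp k i), X j with hyy
  have hypos : ∀ i ≤ k.length, 0 < yy i := fun i hi => prod_X_pos hX (hKle i hi)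
  have hylt : ∀ i < k.length, yy (i + 1) < 1 := fun i hi =>
    prod_X_lt_one hX (hKle (i + 1) (by omega)) (hKpos i hi)
  have hfk : fk k X = ∏ i ∈ Finset.range k.length, (yy i / (1 - yy (i + 1))) := rfl
  have hfac : ∀ i < k.length,
      yy i / (1 - yy (i + 1)) = ∑' a : ℕ, yy i * yy (i + 1) ^ a := by
    intro i hi
    rw [tsum_mul_left, tsum_geometric_of_lt_one (hypos (i + 1) (by omega)).le (hylt i hi),
      div_eq_mul_inv]
  have hsummable : ∀ i < k.length, Summable (fun a : ℕ => yy i * yy (i + 1) ^ a) := by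
    intro i hi
    exact (summable_geometric_of_lt_one (hypos (i + 1) (by omega)).le (hylt i hi)).mul_left _
  calc ENNReal.ofReal (fk k X)
      = ∏ i ∈ Finset.range k.length, ENNReal.ofReal (yy i / (1 - yy (i + 1))) := by
        rw [hfk, ENNReal.ofReal_prod_of_nonneg]
        intro i hi
        rw [Finset.mem_range] at hi
        have h1 := hypos i (by omega)
        have h2 := hylt i hi
        have h3 : (0:ℝ) < 1 - yy (i + 1) := by linarith
        positivity
    _ = ∏ i ∈ Finset.range k.length, ∑' a : ℕ, ENNReal.ofReal (yy i * yy (i + 1) ^ a) := by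
        apply Finset.prod_congr rfl
        intro i hi
        rw [Finset.mem_range] at hi
        rw [hfac i hi, ENNReal.ofReal_tsum_of_nonneg
          (fun a => by
            have h1 := hypos i (by omega)
            have h2 := hypos (i + 1) (by omega)
            positivity)
          (hsummable i hi)]
    _ = ∏ i : Fin k.length, ∑' a : ℕ, ENNReal.ofReal (yy i * yy ((i : ℕ) + 1) ^ a) :=
        (Fin.prod_univ_eq_prod_range (fun i => ∑' a : ℕ, ENNReal.ofReal (yy i * yy (i + 1) ^ a))
          k.length).symm
    _ = ∑' m : Fin k.length → ℕ, ∏ i : Fin k.length,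
          ENNReal.ofReal (yy i * yy ((i : ℕ) + 1) ^ m i) :=
        tsum_pi_prod k.length _
    _ = ∑' m : Fin k.length → ℕ,
          ENNReal.ofReal (∏ j ∈ Finset.range k.sum, X j ^ (nu m (bIdx k j) - 1)) := by
        apply tsum_congr
        intro m
        rw [← ENNReal.ofReal_prod_of_nonneg (fun i _ => by
          have h1 := hypos i (le_of_lt i.isLt)
          have h2 := hypos ((i : ℕ) + 1) (by have := i.isLt; omega)
          positivity)]
        congr 1
        rw [show (∏ i : Fin k.length, yy i * yy ((i : ℕ) + 1) ^ m i)
            = ∏ i ∈ Finset.range k.length, (yy i * yy (i + 1) ^ mext m i) from ?_,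
          monomial_identity k hk m X]
        rw [← Fin.prod_univ_eq_prod_range (fun i => yy i * yy (i + 1) ^ mext m i) k.length]
        exact Finset.prod_congr rfl fun i _ => by rw [mext_coe]

end F
section G
variable (k : List ℕ)

lemma block_prod {M : Type*} [CommMonoid M] (hk : ∀ a ∈ k, 0 < a)
    (m : Fin k.length → ℕ) (f : ℕ → M) :
    ∏ j ∈ Finset.range k.sum, f (nu m (bIdx k j) - 1)
      = ∏ i ∈ Finset.range k.length, (f (nu m i - 1)) ^ (k.getD i 0) := by
  rw [← Kp_length k, prod_blocks k _ k.length le_rfl]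
  apply Finset.prod_congr rfl
  intro i hi
  rw [Finset.mem_range] at hi
  have hb : ∀ j ∈ Finset.Ico (Kp k i) (Kp k (i + 1)),
      f (nu m (bIdx k j) - 1) = f (nu m i - 1) := by
    intro j hj
    rw [Finset.mem_Ico] at hj
    rw [bIdx_eq k hi hj.1 hj.2]
  rw [Finset.prod_congr rfl hb, Finset.prod_const, Nat.card_Ico, Kp_succ k hi]
  congr 1
  rw [List.get_eq_getElem, List.getD_eq_getElem k 0 hi]
  simp only [Fin.val_mk]
  omega

lemma term_value (hk : ∀ a ∈ k, 0 < a) (m : Fin k.length → ℕ) :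
    ∏ j ∈ Finset.range k.sum, (((nu m (bIdx k j) - 1 : ℕ) : ℝ) + 1)⁻¹
      = ∏ i : Fin k.length, ((nu m (i : ℕ) : ℝ) ^ (k.get i))⁻¹ := by
  rw [block_prod k hk m (fun e => ((e : ℝ) + 1)⁻¹)]
  rw [← Fin.prod_univ_eq_prod_range
    (fun i => ((((nu m i - 1 : ℕ) : ℝ) + 1)⁻¹) ^ (k.getD i 0)) k.length]
  apply Finset.prod_congr rfl
  intro i _
  have h1 : 1 ≤ nu m (i : ℕ) := nu_pos m i.isLt
  have hc : (((nu m (i : ℕ) - 1 : ℕ) : ℝ) + 1) = (nu m (i : ℕ) : ℝ) := by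
    push_cast [Nat.cast_sub h1]
    ring
  rw [hc, inv_pow]
  congr 2
  rw [List.get_eq_getElem, List.getD_eq_getElem k 0 i.isLt]

end G
section H

lemma term_nonneg (k : List ℕ) (m : Fin k.length → ℕ) :
    0 ≤ ∏ i : Fin k.length, ((nu m (i : ℕ) : ℝ) ^ (k.get i))⁻¹ :=
  Finset.prod_nonneg fun i _ => by positivity

lemma Z_lt_top {p : ℕ} (hp : 0 < p) (e : Fin p → ℕ) (he : ∀ i, 1 ≤ e i)
    (he0 : 2 ≤ e ⟨0, hp⟩) :
    ∑' m : Fin p → ℕ,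
      ENNReal.ofReal (∏ i : Fin p, ((nu m (i : ℕ) : ℝ) ^ (e i))⁻¹) ≠ ⊤ := by
  set s : ℝ := 1 + 1 / (p : ℝ) with hsdef
  have hppos : (0 : ℝ) < p := by exact_mod_cast hp
  have hs1 : 1 < s := by
    rw [hsdef]
    have : 0 < 1 / (p : ℝ) := by positivity
    linarith
  have hbound : ∀ m : Fin p → ℕ,
      (∏ i : Fin p, ((nu m (i : ℕ) : ℝ) ^ (e i))⁻¹)
        ≤ ∏ i : Fin p, ((((m i : ℝ) + 1) ^ s)⁻¹) := by
    intro m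
    have hnu1 : ∀ i : Fin p, 1 ≤ nu m (i : ℕ) := fun i => nu_pos m i.isLt
    have fact1 : (∏ i : Fin p, (m i + 1)) ≤ ∏ i : Fin p, nu m (i : ℕ) :=
      Finset.prod_le_prod' fun i _ => by
        have := one_add_le_nu m i.isLt
        rw [mext_coe] at this
        omega
    have fact2 : (∏ i : Fin p, (m i + 1)) ≤ (nu m 0) ^ p := by
      calc (∏ i : Fin p, (m i + 1)) ≤ ∏ _i : Fin p, nu m 0 :=
            Finset.prod_le_prod' fun i _ => one_add_le_nu_zero m i
        _ = (nu m 0) ^ p := by rw [Finset.prod_const, Finset.card_univ, Fintype.card_fin]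
    have fact3 : nu m 0 * ∏ i : Fin p, nu m (i : ℕ) ≤ ∏ i : Fin p, (nu m (i : ℕ)) ^ (e i) := by
      obtain ⟨q, rfl⟩ : ∃ q, p = q + 1 := ⟨p - 1, by omega⟩
      rw [Fin.prod_univ_succ, Fin.prod_univ_succ]
      have he00 : 2 ≤ e 0 := by
        have : (⟨0, hp⟩ : Fin (q + 1)) = 0 := rfl
        rwa [this] at he0
      have h0 : nu m 0 * nu m 0 ≤ (nu m ((0 : Fin (q + 1)) : ℕ)) ^ (e 0) := by
        calc nu m 0 * nu m 0 = (nu m ((0 : Fin (q + 1)) : ℕ)) ^ 2 := by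
              norm_num [Fin.val_zero]; ring
          _ ≤ _ := Nat.pow_le_pow_right (hnu1 0) he00
      have hrest : (∏ i : Fin q, nu m ((i.succ : Fin (q + 1)) : ℕ))
          ≤ ∏ i : Fin q, (nu m ((i.succ : Fin (q + 1)) : ℕ)) ^ (e i.succ) :=
        Finset.prod_le_prod' fun i _ => Nat.le_self_pow (by have := he i.succ; omega) _
      calc nu m 0 * (nu m ((0 : Fin (q+1)) : ℕ) * ∏ i : Fin q, nu m ((i.succ : Fin (q+1)) : ℕ))
          = (nu m 0 * nu m 0) * ∏ i : Fin q, nu m ((i.succ : Fin (q+1)) : ℕ) := by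
            rw [show ((0 : Fin (q+1)) : ℕ) = 0 from rfl]; ring
        _ ≤ (nu m ((0 : Fin (q+1)) : ℕ)) ^ (e 0)
              * ∏ i : Fin q, (nu m ((i.succ : Fin (q+1)) : ℕ)) ^ (e i.succ) :=
            Nat.mul_le_mul h0 hrest
    set A : ℝ := ∏ i : Fin p, ((m i : ℝ) + 1) with hAdef
    have hA0 : 0 < A := Finset.prod_pos fun i _ => by positivity
    have hAnat : A = ((∏ i : Fin p, (m i + 1) : ℕ) : ℝ) := by push_cast; rfl
    have hBpos : (0:ℝ) < ∏ i : Fin p, (nu m (i : ℕ) : ℝ) ^ (e i) :=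
      Finset.prod_pos fun i _ => by have := hnu1 i; positivity
    have key : A ^ s ≤ ∏ i : Fin p, (nu m (i : ℕ) : ℝ) ^ (e i) := by
      have hstep1 : A ^ s = A * A ^ (1 / (p:ℝ)) := by
        rw [hsdef, Real.rpow_add hA0, Real.rpow_one]
      have hstep2 : A ^ (1 / (p:ℝ)) ≤ (nu m 0 : ℝ) := by
        have h2r : A ≤ ((nu m 0 : ℝ)) ^ (p : ℕ) := by
          rw [hAnat]; exact_mod_cast fact2
        calc A ^ (1 / (p:ℝ)) ≤ (((nu m 0 : ℝ)) ^ (p : ℕ)) ^ (1 / (p:ℝ)) :=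
              Real.rpow_le_rpow hA0.le h2r (by positivity)
          _ = ((nu m 0 : ℝ)) ^ ((p : ℝ) * (1 / (p:ℝ))) := by
              rw [← Real.rpow_natCast ((nu m 0 : ℝ)) p, ← Real.rpow_mul (by positivity)]
          _ = (nu m 0 : ℝ) := by
              rw [mul_one_div, div_self (ne_of_gt hppos), Real.rpow_one]
      have hstep3 : A ≤ ∏ i : Fin p, (nu m (i : ℕ) : ℝ) := by
        rw [hAnat]; exact_mod_cast fact1
      have hfin : (nu m 0 : ℝ) * ∏ i : Fin p, (nu m (i : ℕ) : ℝ)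
          ≤ ∏ i : Fin p, (nu m (i : ℕ) : ℝ) ^ (e i) := by exact_mod_cast fact3
      calc A ^ s = A * A ^ (1 / (p:ℝ)) := hstep1
        _ ≤ (∏ i : Fin p, (nu m (i : ℕ) : ℝ)) * (nu m 0 : ℝ) :=
            mul_le_mul hstep3 hstep2 (by positivity) (by positivity)
        _ = (nu m 0 : ℝ) * ∏ i : Fin p, (nu m (i : ℕ) : ℝ) := by ring
        _ ≤ _ := hfin
    have hL : (∏ i : Fin p, ((nu m (i : ℕ) : ℝ) ^ (e i))⁻¹)
        = (∏ i : Fin p, (nu m (i : ℕ) : ℝ) ^ (e i))⁻¹ := Finset.prod_inv_distrib _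
    have hR : (∏ i : Fin p, ((((m i : ℝ) + 1) ^ s)⁻¹)) = (A ^ s)⁻¹ := by
      rw [Finset.prod_inv_distrib, Real.finset_prod_rpow _ _ (fun i _ => by positivity) s]
    rw [hL, hR]
    exact inv_anti₀ (by positivity) key
  have hterm_nonneg : ∀ a : ℕ, (0:ℝ) ≤ (((a : ℝ) + 1) ^ s)⁻¹ := fun a => by positivity
  have hsum : Summable (fun a : ℕ => (((a : ℝ) + 1) ^ s)⁻¹) := by
    have h1 : Summable (fun n : ℕ => 1 / (n : ℝ) ^ s) :=
      Real.summable_one_div_nat_rpow.mpr hs1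
    have h2 := (_root_.summable_nat_add_iff 1).2 h1
    apply h2.congr
    intro a
    push_cast
    rw [one_div]
  have hfin : ∑' m : Fin p → ℕ,
      ENNReal.ofReal (∏ i : Fin p, ((nu m (i : ℕ) : ℝ) ^ (e i))⁻¹) < ⊤ := by
    calc ∑' m : Fin p → ℕ,
          ENNReal.ofReal (∏ i : Fin p, ((nu m (i : ℕ) : ℝ) ^ (e i))⁻¹)
        ≤ ∑' m : Fin p → ℕ, ∏ i : Fin p, ENNReal.ofReal ((((m i : ℝ) + 1) ^ s)⁻¹) := by
          apply ENNReal.tsum_le_tsum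
          intro m
          rw [← ENNReal.ofReal_prod_of_nonneg (fun i _ => hterm_nonneg (m i))]
          exact ENNReal.ofReal_le_ofReal (hbound m)
      _ = ∏ _i : Fin p, ∑' a : ℕ, ENNReal.ofReal ((((a : ℝ) + 1) ^ s)⁻¹) :=
          (tsum_pi_prod p (fun _ a => ENNReal.ofReal ((((a : ℝ) + 1) ^ s)⁻¹))).symm
      _ < ⊤ := by
          apply ENNReal.prod_lt_top
          intro i _
          rw [← ENNReal.ofReal_tsum_of_nonneg hterm_nonneg hsum]
          exact ENNReal.ofReal_lt_top
  exact hfin.ne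

end H
lemma fk_nonneg (k : List ℕ) (hk : ∀ a ∈ k, 0 < a) (X : ℕ → ℝ)
    (hX : ∀ j < k.sum, 0 < X j ∧ X j < 1) : 0 ≤ fk k X := by
  have hKle : ∀ i, i ≤ k.length → Kp k i ≤ k.sum := by
    intro i hi
    rw [← Kp_length k]
    exact Kp_mono k hi
  have hKpos : ∀ i, i < k.length → 1 ≤ Kp k (i + 1) := by
    intro i hi
    have := Kp_lt k hk (show 0 < i + 1 by omega) (by omega)
    rw [Kp_zero] at this
    omega
  apply Finset.prod_nonneg
  intro i hi
  rw [Finset.mem_range] at hi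
  have h1 : 0 < ∏ j ∈ Finset.range ((k.take i).sum), X j :=
    prod_X_pos hX (hKle i (by omega))
  have h2 : ∏ j ∈ Finset.range ((k.take (i + 1)).sum), X j < 1 :=
    prod_X_lt_one hX (hKle (i + 1) (by omega)) (hKpos i hi)
  have h3 : (0:ℝ) < 1 - ∏ j ∈ Finset.range ((k.take (i + 1)).sum), X j := by linarith
  positivity


/-- **Cubical integral representation of multiple zeta values** (Proposition 1.3):
for a tuple `k = (k₁,…,k_p)` of positive integers with `k₁ ≥ 2` and `n = k₁+…+k_p`,
the function `f_k` is Lebesgue integrable on `(0,1)^n` and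
`ζ(k) = ∫_{(0,1)^n} f_k(x₁,…,x_n) dx₁⋯dx_n`. -/
theorem zeta_eq_integral_cube (k : List ℕ)
    (hk : ∀ a ∈ k, 0 < a) (hk1 : 2 ≤ k.headI) :
    IntegrableOn (fun x : Fin k.sum → ℝ => fk k (extFin x)) (cube k.sum) volume ∧
      (∫ x in cube k.sum, fk k (extFin x)) = zeta k := by
  have hne : k ≠ [] := by
    intro h
    rw [h] at hk1
    simp at hk1
  have hp : 0 < k.length := List.length_pos_iff.2 hne
  have hk2 : 2 ≤ k.get ⟨0, hp⟩ := by
    obtain ⟨a, t, rfl⟩ := List.exists_cons_of_ne_nil hne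
    exact hk1
  -- basic cube facts
  have hXcube : ∀ x : Fin k.sum → ℝ, x ∈ cube k.sum →
      ∀ j < k.sum, 0 < extFin x j ∧ extFin x j < 1 := by
    intro x hx j hj
    rw [extFin, dif_pos hj]
    exact ⟨(hx ⟨j, hj⟩).1, (hx ⟨j, hj⟩).2⟩
  -- measurability
  have hext : ∀ j : ℕ, Measurable (fun x : Fin k.sum → ℝ => extFin x j) := by
    intro j
    unfold extFin
    by_cases h : j < k.sum
    · simp only [dif_pos h]; exact measurable_pi_apply _
    · simp only [dif_neg h]; exact measurable_const
  have hGmeas : Measurable (fun x : Fin k.sum → ℝ => fk k (extFin x)) := by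
    unfold fk
    apply Finset.measurable_prod
    intro i _
    exact (Finset.measurable_prod _ fun j _ => hext j).div
      (measurable_const.sub (Finset.measurable_prod _ fun j _ => hext j))
  have hGnonneg : 0 ≤ᵐ[volume.restrict (cube k.sum)]
      fun x : Fin k.sum → ℝ => fk k (extFin x) := by
    refine (ae_restrict_iff' (cube_measurable k.sum)).2 (ae_of_all _ ?_)
    intro x hx
    exact fk_nonneg k hk (extFin x) (hXcube x hx)
  -- the monomials
  set mono : (Fin k.length → ℕ) → (Fin k.sum → ℝ) → ℝ :=
    fun m x => ∏ j : Fin k.sum, x j ^ (nu m (bIdx k (j : ℕ)) - 1) with hmono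
  have hmono_meas : ∀ m, Measurable (mono m) := fun m =>
    Finset.measurable_prod _ fun j _ => (measurable_pi_apply j).pow_const _
  have hmono_nonneg : ∀ m, 0 ≤ᵐ[volume.restrict (cube k.sum)] mono m := by
    intro m
    refine (ae_restrict_iff' (cube_measurable k.sum)).2 (ae_of_all _ ?_)
    intro x hx
    exact Finset.prod_nonneg fun j _ => pow_nonneg (hx j).1.le _
  -- key lintegral computation
  have key : ∫⁻ x in cube k.sum, ENNReal.ofReal (fk k (extFin x))
      = ∑' m : Fin k.length → ℕ,
          ENNReal.ofReal (∏ i : Fin k.length, ((nu m (i : ℕ) : ℝ) ^ (k.get i))⁻¹) := by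
    calc ∫⁻ x in cube k.sum, ENNReal.ofReal (fk k (extFin x))
        = ∫⁻ x in cube k.sum, ∑' m : Fin k.length → ℕ, ENNReal.ofReal (mono m x) := by
          apply setLIntegral_congr_fun (cube_measurable k.sum)
          intro x hx
          show ENNReal.ofReal (fk k (extFin x)) = ∑' m : Fin k.length → ℕ, ENNReal.ofReal (mono m x)
          rw [fk_expansion k hk (extFin x) (hXcube x hx)]
          apply tsum_congr
          intro m
          congr 1
          rw [hmono]
          rw [← Fin.prod_univ_eq_prod_range
            (fun j => extFin x j ^ (nu m (bIdx k j) - 1)) k.sum]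
          apply Finset.prod_congr rfl
          intro j _
          rw [extFin, dif_pos j.isLt, Fin.eta]
      _ = ∑' m : Fin k.length → ℕ, ∫⁻ x in cube k.sum, ENNReal.ofReal (mono m x) :=
          lintegral_tsum fun m => ((hmono_meas m).ennreal_ofReal).aemeasurable
      _ = ∑' m : Fin k.length → ℕ,
          ENNReal.ofReal (∏ i : Fin k.length, ((nu m (i : ℕ) : ℝ) ^ (k.get i))⁻¹) := by
          apply tsum_congr
          intro m
          rw [← ofReal_integral_eq_lintegral_ofReal
            (monomial_cube k.sum (fun j => nu m (bIdx k (j : ℕ)) - 1)).1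
            (hmono_nonneg m)]
          congr 1
          rw [(monomial_cube k.sum (fun j => nu m (bIdx k (j : ℕ)) - 1)).2,
            ← term_value k hk m,
            ← Fin.prod_univ_eq_prod_range
              (fun j => (((nu m (bIdx k j) - 1 : ℕ) : ℝ) + 1)⁻¹) k.sum]
  have hZ : ∑' m : Fin k.length → ℕ,
      ENNReal.ofReal (∏ i : Fin k.length, ((nu m (i : ℕ) : ℝ) ^ (k.get i))⁻¹) ≠ ⊤ :=
    Z_lt_top hp (fun i => k.get i) (fun i => hk _ (List.get_mem k i)) hk2
  have hInt : IntegrableOn (fun x : Fin k.sum → ℝ => fk k (extFin x)) (cube k.sum) volume := by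
    constructor
    · exact hGmeas.aestronglyMeasurable.restrict
    · rw [hasFiniteIntegral_iff_ofReal hGnonneg, key]
      exact hZ.lt_top
  refine ⟨hInt, ?_⟩
  rw [integral_eq_lintegral_of_nonneg_ae hGnonneg hGmeas.aestronglyMeasurable.restrict, key]
  rw [ENNReal.tsum_toReal_eq (fun m => ENNReal.ofReal_ne_top)]
  have htr : ∀ m : Fin k.length → ℕ,
      (ENNReal.ofReal (∏ i : Fin k.length, ((nu m (i : ℕ) : ℝ) ^ (k.get i))⁻¹)).toReal
        = ∏ i : Fin k.length, ((nu m (i : ℕ) : ℝ) ^ (k.get i))⁻¹ := fun m =>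
    ENNReal.toReal_ofReal (term_nonneg k m)
  rw [tsum_congr htr]
  -- reindex via the equivalence
  rw [zeta, ← (decEquiv k.length).tsum_eq]
  apply tsum_congr
  intro m
  apply Finset.prod_congr rfl
  intro i _
  rw [one_div]
  rfl
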